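/- The commutator subgroup [W(E), W(E)] is abelian if and only if for every vertex j ∈ {1,…,d} there exists at most one vertex i ≠ j with ¬E i j (i.e. every vertex has at most one non-neighbour in the graph E). -/

import Mathlib

/-- Relators of the right-angled Coxeter group of the graph `E`:
`s j ^ 2` for every vertex `j`, and `(s i * s j) ^ 2` for every edge `{i, j}` of `E`. -/
def racgRels {d : ℕ} (E : Fin d → Fin d → Prop) : Set (FreeGroup (Fin d)) :=
  {r | (∃ j : Fin d, r = FreeGroup.of j ^ 2) ∨
    ∃ i j : Fin d, E i j ∧ r = (FreeGroup.of i * FreeGroup.of j) ^ 2}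

/-- The right-angled Coxeter group `W(E)` of the graph `E`. -/
abbrev RACG {d : ℕ} (E : Fin d → Fin d → Prop) : Type := PresentedGroup (racgRels E)

/-- The standard generator `s j` of the right-angled Coxeter group `W(E)`. -/
def racgGen {d : ℕ} (E : Fin d → Fin d → Prop) (j : Fin d) : RACG E :=
  PresentedGroup.of j


namespace RacgAux

open scoped commutatorElement

variable {d : ℕ} {E : Fin d → Fin d → Prop}

lemma rel_one {r : FreeGroup (Fin d)} (hr : r ∈ racgRels E) :
    PresentedGroup.mk (racgRels E) r = 1 :=
  (QuotientGroup.eq_one_iff _).mpr (Subgroup.subset_normalClosure hr)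

lemma gen_sq (j : Fin d) : racgGen E j * racgGen E j = 1 := by
  have := rel_one (E := E) (Or.inl ⟨j, rfl⟩)
  simpa [racgGen, PresentedGroup.of, sq, map_mul] using this

lemma gen_inv (j : Fin d) : (racgGen E j)⁻¹ = racgGen E j :=
  inv_eq_of_mul_eq_one_right (gen_sq j)

lemma pair_sq {i j : Fin d} (h : E i j) :
    (racgGen E i * racgGen E j) * (racgGen E i * racgGen E j) = 1 := by
  have := rel_one (E := E) (Or.inr ⟨i, j, h, rfl⟩)
  simpa [racgGen, PresentedGroup.of, sq, map_mul] using this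

lemma commute_of_sq {G : Type*} [Group G] {x y : G} (hx : x * x = 1) (hy : y * y = 1)
    (hxy : (x * y) * (x * y) = 1) : Commute x y := by
  have h1 : x * y = (x * y)⁻¹ := (inv_eq_of_mul_eq_one_right hxy).symm
  rw [mul_inv_rev, inv_eq_of_mul_eq_one_right hx, inv_eq_of_mul_eq_one_right hy] at h1
  exact h1

lemma commute_of_E {i j : Fin d} (h : E i j) : Commute (racgGen E i) (racgGen E j) :=
  commute_of_sq (gen_sq i) (gen_sq j) (pair_sq h)

/-- The generating set of the candidate abelian normal subgroup. -/
def S (E : Fin d → Fin d → Prop) : Set (RACG E) :=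
  {x | ∃ i j : Fin d, i ≠ j ∧ ¬ E i j ∧
    x = (racgGen E i * racgGen E j) * (racgGen E i * racgGen E j)}

variable (hsymm : ∀ i j, E i j → E j i)
  (hone : ∀ j i k : Fin d, i ≠ j → k ≠ j → ¬ E i j → ¬ E k j → i = k)

include hsymm hone in
/-- If `¬ E i j` with `i ≠ j`, any other vertex is adjacent to both `i` and `j`. -/
lemma adj_out {i j a : Fin d} (hij : ¬ E i j) (hne : i ≠ j) (hai : a ≠ i) (haj : a ≠ j) :
    E a i ∧ E a j := by
  constructor
  · by_contra hEai
    exact haj (hone i a j hai (Ne.symm hne) hEai (fun h => hij (hsymm _ _ h)))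
  · by_contra hEaj
    exact hai (hone j a i haj hne hEaj hij)

lemma pair_inv (i j : Fin d) :
    (racgGen E j * racgGen E i) * (racgGen E j * racgGen E i)
      = ((racgGen E i * racgGen E j) * (racgGen E i * racgGen E j))⁻¹ := by
  simp only [mul_inv_rev, gen_inv, mul_assoc]

include hsymm in
lemma inv_mem_S {x : RACG E} (hx : x ∈ S E) : x⁻¹ ∈ S E := by
  obtain ⟨i, j, hne, hij, rfl⟩ := hx
  exact ⟨j, i, hne.symm, fun h => hij (hsymm _ _ h), (pair_inv i j).symm⟩

include hsymm hone in
lemma commute_S {x y : RACG E} (hx : x ∈ S E) (hy : y ∈ S E) : Commute x y := by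
  obtain ⟨i, j, hij, hEij, rfl⟩ := hx
  obtain ⟨k, l, hkl, hEkl, hy⟩ := hy
  by_cases hik : i = k
  · have hjl : j = l := hone i j l (Ne.symm hij) (hik ▸ Ne.symm hkl)
      (fun h => hEij (hsymm _ _ h)) (fun h => (hik ▸ hEkl) (hsymm _ _ h))
    rw [hy, ← hik, ← hjl]
  · by_cases hil : i = l
    · have hjk : j = k := hone i j k (Ne.symm hij) (hil ▸ hkl)
        (fun h => hEij (hsymm _ _ h)) (hil ▸ hEkl)
      rw [hy, ← hil, ← hjk, pair_inv]
      exact (Commute.refl _).inv_right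
    · by_cases hjk : j = k
      · have : i = l := hone j i l hij (hjk ▸ Ne.symm hkl) hEij
          (fun h => (hjk ▸ hEkl) (hsymm _ _ h))
        exact absurd this hil
      · by_cases hjl : j = l
        · have : i = k := hone j i k hij (hjl ▸ hkl) hEij (hjl ▸ hEkl)
          exact absurd this hik
        · have c1 : Commute (racgGen E i) (racgGen E k) :=
            commute_of_E (adj_out hsymm hone hEkl hkl hik hil).1
          have c2 : Commute (racgGen E i) (racgGen E l) :=
            commute_of_E (adj_out hsymm hone hEkl hkl hik hil).2
          have c3 : Commute (racgGen E j) (racgGen E k) :=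
            commute_of_E (adj_out hsymm hone hEkl hkl hjk hjl).1
          have c4 : Commute (racgGen E j) (racgGen E l) :=
            commute_of_E (adj_out hsymm hone hEkl hkl hjk hjl).2
          subst hy
          have cik : Commute (racgGen E i * racgGen E j) (racgGen E k * racgGen E l) :=
            (c1.mul_right c2).mul_left (c3.mul_right c4)
          exact (cik.mul_left cik).mul_right (cik.mul_left cik)


/-- The candidate abelian normal subgroup. -/
def N (E : Fin d → Fin d → Prop) : Subgroup (RACG E) := Subgroup.closure (S E)

include hsymm hone in
lemma commute_N {x y : RACG E} (hx : x ∈ N E) (hy : y ∈ N E) : Commute x y := by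
  induction hx, hy using Subgroup.closure_induction₂ with
  | mem x y hx hy => exact commute_S hsymm hone hx hy
  | one_left x hx => exact Commute.one_left x
  | one_right x hx => exact Commute.one_right x
  | mul_left x y z _ _ _ h1 h2 => exact h1.mul_left h2
  | mul_right x y z _ _ _ h1 h2 => exact h1.mul_right h2
  | inv_left x y _ _ h => exact h.inv_left
  | inv_right x y _ _ h => exact h.inv_right

include hsymm hone in
/-- Conjugation by a generator preserves `S` (up to membership in `N`). -/
lemma conj_gen_S {a : Fin d} {t : RACG E} (ht : t ∈ S E) :
    racgGen E a * t * (racgGen E a)⁻¹ ∈ N E := by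
  obtain ⟨i, j, hij, hEij, rfl⟩ := ht
  rw [gen_inv]
  by_cases hai : a = i
  · subst hai
    have : racgGen E a * ((racgGen E a * racgGen E j) * (racgGen E a * racgGen E j)) *
        racgGen E a = (racgGen E j * racgGen E a) * (racgGen E j * racgGen E a) := by
      have sq := gen_sq (E := E) a
      group
      rw [sq, one_mul]
    rw [this]
    exact Subgroup.subset_closure ⟨j, a, Ne.symm hij, fun h => hEij (hsymm _ _ h), rfl⟩
  · by_cases haj : a = j
    · subst haj
      have : racgGen E a * ((racgGen E i * racgGen E a) * (racgGen E i * racgGen E a)) *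
          racgGen E a = (racgGen E a * racgGen E i) * (racgGen E a * racgGen E i) := by
        have sq := gen_sq (E := E) a
        simp only [← mul_assoc]
        rw [mul_assoc _ (racgGen E a) (racgGen E a), sq, mul_one]
      rw [this]
      exact Subgroup.subset_closure ⟨a, i, Ne.symm hij, fun h => hEij (hsymm _ _ h), rfl⟩
    · have c1 : Commute (racgGen E a) (racgGen E i) :=
        commute_of_E (adj_out hsymm hone hEij hij hai haj).1
      have c2 : Commute (racgGen E a) (racgGen E j) :=
        commute_of_E (adj_out hsymm hone hEij hij hai haj).2
      have c : Commute (racgGen E a)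
          ((racgGen E i * racgGen E j) * (racgGen E i * racgGen E j)) :=
        (c1.mul_right c2).mul_right (c1.mul_right c2)
      rw [c.eq, mul_assoc, gen_sq, mul_one]
      exact Subgroup.subset_closure ⟨i, j, hij, hEij, rfl⟩

include hsymm hone in
lemma conj_gen_N {a : Fin d} {n : RACG E} (hn : n ∈ N E) :
    racgGen E a * n * (racgGen E a)⁻¹ ∈ N E := by
  induction hn using Subgroup.closure_induction with
  | mem t ht => exact conj_gen_S hsymm hone ht
  | one => simpa using one_mem (N E)
  | mul x y _ _ hx hy =>
    have : racgGen E a * (x * y) * (racgGen E a)⁻¹ =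
        (racgGen E a * x * (racgGen E a)⁻¹) * (racgGen E a * y * (racgGen E a)⁻¹) := by group
    rw [this]; exact mul_mem hx hy
  | inv x _ hx =>
    have : racgGen E a * x⁻¹ * (racgGen E a)⁻¹ =
        (racgGen E a * x * (racgGen E a)⁻¹)⁻¹ := by group
    rw [this]; exact inv_mem hx

include hsymm hone in
lemma N_normal : (N E).Normal := by
  rw [← Subgroup.normalizer_eq_top_iff, eq_top_iff]
  intro g _
  refine PresentedGroup.generated_by _ _ (fun a => ?_) g
  rw [Subgroup.mem_normalizer_iff]
  intro n
  constructor
  · intro hn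
    simpa [racgGen] using conj_gen_N hsymm hone (a := a) hn
  · intro hn
    have h2 := conj_gen_N hsymm hone (a := a) hn
    have he : racgGen E a * (PresentedGroup.of a * n * (PresentedGroup.of a)⁻¹) *
        (racgGen E a)⁻¹ = n := by
      show racgGen E a * (racgGen E a * n * (racgGen E a)⁻¹) * (racgGen E a)⁻¹ = n
      rw [gen_inv]
      simp only [← mul_assoc]
      rw [gen_sq, one_mul, mul_assoc, gen_sq, mul_one]
    rwa [he] at h2


include hsymm hone in
lemma mem_N_commutator (g h : RACG E) : ⁅g, h⁆ ∈ N E := by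
  haveI : (N E).Normal := N_normal hsymm hone
  set φ := QuotientGroup.mk' (N E) with hφ
  -- every element of the quotient lies in a subgroup containing the generator images
  have hQgen : ∀ (H : Subgroup (RACG E ⧸ N E)), (∀ a, φ (racgGen E a) ∈ H) → ∀ q, q ∈ H := by
    intro H hH q
    obtain ⟨g, rfl⟩ := QuotientGroup.mk'_surjective (N E) q
    exact PresentedGroup.generated_by _ (H.comap φ) (fun a => hH a) g
  -- generator images commute in the quotient
  have hgen : ∀ a b : Fin d, Commute (φ (racgGen E a)) (φ (racgGen E b)) := by
    intro a b
    by_cases hab : a = b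
    · subst hab; exact Commute.refl _
    · by_cases hE : E a b
      · exact (commute_of_E hE).map φ
      · have hmem : (racgGen E a * racgGen E b) * (racgGen E a * racgGen E b) ∈ N E :=
          Subgroup.subset_closure ⟨a, b, hab, hE, rfl⟩
        have h1 : φ ((racgGen E a * racgGen E b) * (racgGen E a * racgGen E b)) = 1 :=
          (QuotientGroup.eq_one_iff _).mpr hmem
        refine commute_of_sq ?_ ?_ ?_
        · rw [← map_mul, gen_sq, map_one]
        · rw [← map_mul, gen_sq, map_one]
        · simpa only [map_mul] using h1
  have hcomm : ∀ q r : RACG E ⧸ N E, Commute q r := by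
    intro q r
    have h1 : ∀ a : Fin d, Commute (φ (racgGen E a)) r := by
      intro a
      have := hQgen (Subgroup.centralizer {φ (racgGen E a)}) (fun b => by
        rw [Subgroup.mem_centralizer_iff]
        rintro x ⟨rfl⟩
        exact (hgen a b).eq) r
      rw [Subgroup.mem_centralizer_iff] at this
      exact this _ rfl
    have := hQgen (Subgroup.centralizer {r}) (fun a => by
      rw [Subgroup.mem_centralizer_iff]
      rintro x ⟨rfl⟩
      exact ((h1 a).symm).eq) q
    rw [Subgroup.mem_centralizer_iff] at this
    exact Commute.symm (this _ rfl)
  have : φ ⁅g, h⁆ = 1 := by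
    rw [map_commutatorElement]
    exact (hcomm (φ g) (φ h)).commutator_eq
  exact (QuotientGroup.eq_one_iff _).mp this

include hsymm hone in
lemma commutator_le_N : commutator (RACG E) ≤ N E := by
  rw [commutator_def]
  exact Subgroup.commutator_le.mpr fun g _ h _ => mem_N_commutator hsymm hone g h


/-! ### Forward direction: a concrete non-commuting witness in `Perm (Fin 4)` -/

def pA : Equiv.Perm (Fin 4) := Equiv.swap 2 3
def pB : Equiv.Perm (Fin 4) := Equiv.swap 1 2
def pC : Equiv.Perm (Fin 4) := Equiv.swap 0 1

/-- The assignment of permutations to generators. -/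
def fmap (i k j v : Fin d) : Equiv.Perm (Fin 4) :=
  if v = i then pA else if v = k then pC else if v = j then pB else 1

lemma fmap_cases {i k j : Fin d} (hik : i ≠ k) (hij : i ≠ j) (hkj : k ≠ j) (v : Fin d) :
    (fmap i k j v = pA ∧ v = i) ∨ (fmap i k j v = pC ∧ v = k) ∨
      (fmap i k j v = pB ∧ v = j) ∨ fmap i k j v = 1 := by
  by_cases h1 : v = i
  · exact Or.inl ⟨by simp [fmap, h1], h1⟩
  · by_cases h2 : v = k
    · exact Or.inr (Or.inl ⟨by simp [fmap, h1, h2, Ne.symm hik], h2⟩)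
    · by_cases h3 : v = j
      · exact Or.inr (Or.inr (Or.inl ⟨by simp [fmap, h1, h2, h3, Ne.symm hij, Ne.symm hkj], h3⟩))
      · exact Or.inr (Or.inr (Or.inr (by simp [fmap, h1, h2, h3])))

variable (hirr : ∀ i, ¬ E i i)

include hsymm hirr in
lemma forward_dir
    (hab : ∀ x y : RACG E, x ∈ commutator (RACG E) → y ∈ commutator (RACG E) → x * y = y * x)
    {j i k : Fin d} (hijne : i ≠ j) (hkjne : k ≠ j) (hEij : ¬ E i j) (hEkj : ¬ E k j) :
    i = k := by
  by_contra hik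
  set f : Fin d → Equiv.Perm (Fin 4) := fmap i k j with hfdef
  have key := fmap_cases hik hijne hkjne
  have hf1 : ∀ v, f v * f v = 1 := by
    intro v
    rcases key v with ⟨h, -⟩ | ⟨h, -⟩ | ⟨h, -⟩ | h <;> rw [hfdef, h] <;> decide
  have hf2 : ∀ a b, E a b → (f a * f b) * (f a * f b) = 1 := by
    intro a b hE
    rcases key a with ⟨ha, rfl⟩ | ⟨ha, rfl⟩ | ⟨ha, rfl⟩ | ha <;>
      rcases key b with ⟨hb, rfl⟩ | ⟨hb, rfl⟩ | ⟨hb, rfl⟩ | hb <;>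
      simp only [hfdef, ha, hb] <;>
      first
        | decide
        | exact absurd hE (hirr _)
        | exact absurd hE hEij
        | exact absurd (hsymm _ _ hE) hEij
        | exact absurd hE hEkj
        | exact absurd (hsymm _ _ hE) hEkj
  have hrel : ∀ r ∈ racgRels E, FreeGroup.lift f r = 1 := by
    rintro r (⟨v, rfl⟩ | ⟨a, b, hE, rfl⟩)
    · rw [map_pow, FreeGroup.lift_apply_of, sq, hf1]
    · rw [map_pow, map_mul, FreeGroup.lift_apply_of, FreeGroup.lift_apply_of, sq]
      exact hf2 a b hE
  set φ := PresentedGroup.toGroup hrel with hφ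
  have hφg : ∀ v, φ (racgGen E v) = f v := fun v => PresentedGroup.toGroup.of hrel
  have hx : ⁅racgGen E i, racgGen E j⁆ ∈ commutator (RACG E) := by
    rw [commutator_def]
    exact Subgroup.commutator_mem_commutator (Subgroup.mem_top _) (Subgroup.mem_top _)
  have hy : ⁅racgGen E k, racgGen E j⁆ ∈ commutator (RACG E) := by
    rw [commutator_def]
    exact Subgroup.commutator_mem_commutator (Subgroup.mem_top _) (Subgroup.mem_top _)
  have h := congrArg φ (hab _ _ hx hy)
  rw [map_mul, map_mul, map_commutatorElement, map_commutatorElement, hφg, hφg, hφg] at h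
  have hfi : f i = pA := by simp [hfdef, fmap]
  have hfk : f k = pC := by simp [hfdef, fmap, hik, Ne.symm hik]
  have hfj : f j = pB := by simp [hfdef, fmap, hijne, hkjne, Ne.symm hijne, Ne.symm hkjne]
  rw [hfi, hfk, hfj] at h
  revert h
  decide

end RacgAux

/-- Lemma 4.1: the commutator subgroup `[W(E), W(E)]` is abelian if and only if every
vertex of the graph `E` has at most one non-neighbour. -/
theorem stmt_4 {d : ℕ} (hd : 1 ≤ d) (E : Fin d → Fin d → Prop)
    (hsymm : ∀ i j, E i j → E j i) (hirr : ∀ i, ¬ E i i) :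
    (∀ x y : RACG E, x ∈ commutator (RACG E) → y ∈ commutator (RACG E) → x * y = y * x) ↔
      (∀ j i k : Fin d, i ≠ j → k ≠ j → ¬ E i j → ¬ E k j → i = k) := by
  constructor
  · intro hab j i k h1 h2 h3 h4
    exact RacgAux.forward_dir hsymm hirr hab h1 h2 h3 h4
  · intro hone x y hx hy
    exact RacgAux.commute_N hsymm hone (RacgAux.commutator_le_N hsymm hone hx)
      (RacgAux.commutator_le_N hsymm hone hy)
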